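/- Let x > 2 be a real number and let p be a probability mass function on pairs of positive integers with ∑_{l₁,l₂ ≥ 1} (l₁ + l₂)·p(l₁,l₂) = x. Then the Shannon entropy satisfies H(p) ≤ x·f(x), where f(x) = −2/x − (1 − 2/x)·log₂(x − 2) + log₂ x, and equality holds if and only if p(l₁,l₂) = (λ−1)²·λ^{−(l₁+l₂)} for all l₁, l₂ ≥ 1, where λ = x/(x−2). -/

import Mathlib

set_option maxHeartbeats 1000000

lemma stmt8_core (q p : ℝ) (hq : 0 < q) (hp : 0 ≤ p) :
    p * Real.log q - p * Real.log p ≤ q - p ∧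
      (p * Real.log q - p * Real.log p = q - p ↔ p = q) := by
  rcases eq_or_lt_of_le hp with h0 | hpos
  · simp only [← h0, zero_mul, sub_zero, sub_self]
    exact ⟨hq.le, trivial⟩
  · have h1 : p * Real.log q - p * Real.log p = p * Real.log (q / p) := by
      rw [Real.log_div hq.ne' hpos.ne']; ring
    have h3 : p * (q / p - 1) = q - p := by field_simp
    constructor
    · calc p * Real.log q - p * Real.log p = p * Real.log (q / p) := h1
        _ ≤ p * (q / p - 1) :=
          mul_le_mul_of_nonneg_left (Real.log_le_sub_one_of_pos (div_pos hq hpos)) hp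
        _ = q - p := h3
    · constructor
      · intro he
        by_contra hne
        have hqp : q / p ≠ 1 := by
          intro h; apply hne; field_simp at h; linarith
        have := Real.log_lt_sub_one_of_pos (div_pos hq hpos) hqp
        have := mul_lt_mul_of_pos_left this hpos
        rw [h3] at this; rw [h1] at he; linarith
      · intro he; subst he; simp

lemma stmt8_key (q p : ℝ) (hq : 0 < q) (hp : 0 ≤ p) :
    -(p * Real.logb 2 p) ≤ -(p * Real.logb 2 q) + (q - p) / Real.log 2 ∧
      (-(p * Real.logb 2 p) = -(p * Real.logb 2 q) + (q - p) / Real.log 2 ↔ p = q) := by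
  have hl2 : (0:ℝ) < Real.log 2 := Real.log_pos (by norm_num)
  obtain ⟨h1, h2⟩ := stmt8_core q p hq hp
  have E : -(p * Real.logb 2 p) - (-(p * Real.logb 2 q) + (q - p) / Real.log 2)
      = ((p * Real.log q - p * Real.log p) - (q - p)) / Real.log 2 := by
    simp only [Real.logb]
    field_simp
    ring
  constructor
  · have : ((p * Real.log q - p * Real.log p) - (q - p)) / Real.log 2 ≤ 0 :=
      div_nonpos_of_nonpos_of_nonneg (by linarith) hl2.le
    linarith [E ▸ this]
  · rw [← sub_eq_zero, E, div_eq_zero_iff]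
    constructor
    · rintro (h | h)
      · exact h2.mp (by linarith)
      · exact absurd h hl2.ne'
    · intro he; left; rw [sub_eq_zero]; exact h2.mpr he




/-- Maximum-entropy bound for pairs (Eq. (21) of the paper): if `p` is a pmf on pairs
of positive integers with `∑ (l₁+l₂)·p(l₁,l₂) = x` for some `x > 2`, then its Shannon
entropy (in bits) is at most `x·f(x)` where
`f(x) = -2/x - (1-2/x)·log₂(x-2) + log₂ x`, with equality iff
`p(l₁,l₂) = (λ-1)²·λ^{-(l₁+l₂)}` with `λ = x/(x-2)`. -/
theorem stmt_8 (x : ℝ) (hx : 2 < x) (p : ℕ+ × ℕ+ → ℝ)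
    (hnn : ∀ t, 0 ≤ p t) (hsum : ∑' t : ℕ+ × ℕ+, p t = 1)
    (hmeanS : Summable fun t : ℕ+ × ℕ+ => ((t.1 : ℝ) + (t.2 : ℝ)) * p t)
    (hmean : ∑' t : ℕ+ × ℕ+, ((t.1 : ℝ) + (t.2 : ℝ)) * p t = x)
    (hentS : Summable fun t : ℕ+ × ℕ+ => -(p t * Real.logb 2 (p t))) :
    (∑' t : ℕ+ × ℕ+, -(p t * Real.logb 2 (p t))) ≤
        x * (-2 / x - (1 - 2 / x) * Real.logb 2 (x - 2) + Real.logb 2 x) ∧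
      ((∑' t : ℕ+ × ℕ+, -(p t * Real.logb 2 (p t))) =
          x * (-2 / x - (1 - 2 / x) * Real.logb 2 (x - 2) + Real.logb 2 x) ↔
        ∀ t : ℕ+ × ℕ+,
          p t = (x / (x - 2) - 1) ^ 2 *
            (x / (x - 2)) ^ (-(((t.1 : ℕ) + (t.2 : ℕ) : ℕ) : ℤ))) := by
  have hx0 : (0:ℝ) < x := by linarith
  have hx2 : (0:ℝ) < x - 2 := by linarith
  obtain ⟨r, hr_def⟩ : ∃ r : ℝ, r = (x - 2) / x := ⟨_, rfl⟩
  have hr0 : 0 < r := hr_def ▸ div_pos hx2 hx0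
  have hr1 : r < 1 := by rw [hr_def, div_lt_one hx0]; linarith
  obtain ⟨A, hA_def⟩ : ∃ A : ℝ, A = (2 / (x - 2)) ^ 2 := ⟨_, rfl⟩
  have hA0 : 0 < A := by rw [hA_def]; positivity
  obtain ⟨q, hq_def⟩ : ∃ q : ℕ+ × ℕ+ → ℝ, q = fun t => A * r ^ ((t.1 : ℕ) + (t.2 : ℕ)) := ⟨_, rfl⟩
  have hq_pos : ∀ t, 0 < q t := fun t => by rw [hq_def]; exact mul_pos hA0 (pow_pos hr0 _)
  -- q equals the expression in the statement
  have hq_eq : ∀ t : ℕ+ × ℕ+, q t = (x / (x - 2) - 1) ^ 2 *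
      (x / (x - 2)) ^ (-((((t.1 : ℕ) + (t.2 : ℕ) : ℕ)) : ℤ)) := by
    intro t
    have e1 : x / (x - 2) - 1 = 2 / (x - 2) := by field_simp; ring
    have e2 : (x / (x - 2)) ^ (-((((t.1 : ℕ) + (t.2 : ℕ) : ℕ)) : ℤ))
        = r ^ ((t.1 : ℕ) + (t.2 : ℕ)) := by
      rw [zpow_neg, zpow_natCast, ← inv_pow, inv_div, hr_def]
    rw [e1, e2, hq_def, ← hA_def]
  -- p is summable
  have hpS : Summable p := by
    by_contra h
    rw [tsum_eq_zero_of_not_summable h] at hsum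
    norm_num at hsum
  -- geometric sums
  have hgeoS : Summable (fun n : ℕ => r ^ n) := summable_geometric_of_lt_one hr0.le hr1
  have hFS : Summable (fun l : ℕ+ => r ^ (l : ℕ)) :=
    hgeoS.comp_injective (fun a b h => by exact_mod_cast PNat.coe_injective h)
  have hFsum : ∑' l : ℕ+, r ^ (l : ℕ) = (x - 2) / 2 := by
    rw [← Equiv.tsum_eq Equiv.pnatEquivNat.symm]
    have e : ∀ n : ℕ, r ^ ((Equiv.pnatEquivNat.symm n : ℕ+) : ℕ) = r ^ n * r := by
      intro n
      have : ((Equiv.pnatEquivNat.symm n : ℕ+) : ℕ) = n + 1 := rfl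
      rw [this, pow_succ]
    rw [tsum_congr e, tsum_mul_right, tsum_geometric_of_lt_one hr0.le hr1]
    have h1r : 1 - r = 2 / x := by rw [hr_def]; field_simp; ring
    rw [h1r, hr_def]
    field_simp
  -- q is summable with sum 1
  have hq_fact : ∀ t : ℕ+ × ℕ+, q t = (A * r ^ (t.1 : ℕ)) * r ^ (t.2 : ℕ) := by
    intro t; simp only [hq_def]; rw [pow_add]; ring
  have hqS : Summable q :=
    (((hFS.mul_left A).mul_of_nonneg hFS
      (fun l => by positivity) (fun l => by positivity)).congr
      (fun t => (hq_fact t).symm))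
  have hq_sum : ∑' t, q t = 1 := by
    have hmul : (∑' l : ℕ+, A * r ^ (l : ℕ)) * (∑' l : ℕ+, r ^ (l : ℕ))
        = ∑' t : ℕ+ × ℕ+, (A * r ^ (t.1 : ℕ)) * r ^ (t.2 : ℕ) :=
      tsum_mul_tsum_of_summable_norm
        (summable_norm_iff.mpr (hFS.mul_left A)) (summable_norm_iff.mpr hFS)
    rw [tsum_congr hq_fact, ← hmul, tsum_mul_left, hFsum, hA_def]
    field_simp
  -- logarithm of q
  have hlogq : ∀ t : ℕ+ × ℕ+, Real.logb 2 (q t)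
      = Real.logb 2 A + ((t.1 : ℝ) + (t.2 : ℝ)) * Real.logb 2 r := by
    intro t
    simp only [hq_def]
    rw [Real.logb_mul hA0.ne' (pow_pos hr0 _).ne', Real.logb_pow, Nat.cast_add]
  set c1 : ℝ := -Real.logb 2 A with hc1
  set c2 : ℝ := -Real.logb 2 r with hc2
  have hg_fact : ∀ t : ℕ+ × ℕ+, -(p t * Real.logb 2 (q t))
      = c1 * p t + c2 * (((t.1 : ℝ) + (t.2 : ℝ)) * p t) := by
    intro t
    rw [hlogq t, hc1, hc2]
    ring
  have hgS : Summable (fun t : ℕ+ × ℕ+ => -(p t * Real.logb 2 (q t))) :=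
    ((hpS.mul_left c1).add (hmeanS.mul_left c2)).congr (fun t => (hg_fact t).symm)
  have hg_sum : ∑' t : ℕ+ × ℕ+, -(p t * Real.logb 2 (q t)) = c1 + c2 * x := by
    rw [tsum_congr hg_fact, Summable.tsum_add (hpS.mul_left c1) (hmeanS.mul_left c2),
      tsum_mul_left, tsum_mul_left, hsum, hmean]
    ring
  set T : ℝ := x * (-2 / x - (1 - 2 / x) * Real.logb 2 (x - 2) + Real.logb 2 x) with hT_def
  have hcT : c1 + c2 * x = T := by
    have hA_log : Real.logb 2 A = 2 * (1 - Real.logb 2 (x - 2)) := by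
      rw [hA_def, Real.logb_pow, Real.logb_div two_ne_zero hx2.ne',
        Real.logb_self_eq_one one_lt_two]
      push_cast
      ring
    have hr_log : Real.logb 2 r = Real.logb 2 (x - 2) - Real.logb 2 x := by
      rw [hr_def, Real.logb_div hx2.ne' hx0.ne']
    rw [hc1, hc2, hA_log, hr_log, hT_def]
    field_simp
    ring
  -- the comparison function
  set h : ℕ+ × ℕ+ → ℝ :=
    fun t => -(p t * Real.logb 2 (q t)) + (q t - p t) / Real.log 2 with hh_def
  have hhS : Summable h := hgS.add ((hqS.sub hpS).div_const _)
  have hh_sum : ∑' t, h t = T := by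
    have e : ∑' t, h t = (∑' t : ℕ+ × ℕ+, -(p t * Real.logb 2 (q t)))
        + (∑' t : ℕ+ × ℕ+, (q t - p t)) / Real.log 2 := by
      rw [hh_def, Summable.tsum_add hgS ((hqS.sub hpS).div_const _), tsum_div_const]
    rw [e, Summable.tsum_sub hqS hpS, hq_sum, hsum, hg_sum, sub_self, zero_div, add_zero, hcT]
  have hpt : ∀ t, -(p t * Real.logb 2 (p t)) ≤ h t :=
    fun t => (stmt8_key (q t) (p t) (hq_pos t) (hnn t)).1
  constructor
  · calc ∑' t, -(p t * Real.logb 2 (p t)) ≤ ∑' t, h t := Summable.tsum_le_tsum hpt hentS hhS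
      _ = T := hh_sum
  · constructor
    · intro heq t
      rw [← hq_eq t]
      by_contra hne
      have hlt : -(p t * Real.logb 2 (p t)) < h t :=
        lt_of_le_of_ne (hpt t)
          (fun habs => hne ((stmt8_key (q t) (p t) (hq_pos t) (hnn t)).2.mp habs))
      have hstrict := Summable.tsum_lt_tsum hpt hlt hentS hhS
      rw [hh_sum, heq] at hstrict
      exact lt_irrefl _ hstrict
    · intro hpq
      have e : ∀ t, -(p t * Real.logb 2 (p t)) = -(p t * Real.logb 2 (q t)) := by
        intro t
        have e2 : p t = q t := (hpq t).trans (hq_eq t).symm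
        rw [e2]
      rw [tsum_congr e, hg_sum, hcT]
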